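/- Let R be a commutative ring equipped with a ℤ-grading given by additive subgroups 𝒜 : ℤ → AddSubgroup R (with 1 ∈ 𝒜 0 and 𝒜 m · 𝒜 n ⊆ 𝒜 (m+n), every element decomposing uniquely as a sum of homogeneous components), and let a ∈ 𝒜 1 be a unit of R. Then there is a ring isomorphism from the Laurent polynomial ring (𝒜 0)[T, T⁻¹] over the degree-zero subring 𝒜 0 onto R which sends T to a and restricts to the inclusion on 𝒜 0; moreover this isomorphism identifies, for each n ∈ ℤ, the homogeneous component of degree n of the Laurent polynomial ring with 𝒜 n. -/

import Mathlib

open LaurentPolynomial AddMonoidAlgebra DirectSum in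
private lemma aux_inv_mem {R : Type*} [CommRing R] (𝒜 : ℤ → AddSubgroup R) [GradedRing 𝒜]
    (u : Rˣ) (h1 : (u : R) ∈ 𝒜 1) : ((u⁻¹ : Rˣ) : R) ∈ 𝒜 (-1) := by
  classical
  set x : R := ((u⁻¹ : Rˣ) : R) with hx
  have hc : ∀ k : ℤ, k ≠ -1 → ((DirectSum.decompose 𝒜 x) k : R) = 0 := by
    intro k hk
    have h2 : ((DirectSum.decompose 𝒜 ((u : R) * x)) (1 + k) : R)
        = (u : R) * ((DirectSum.decompose 𝒜 x) k : R) :=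
      DirectSum.coe_decompose_mul_add_of_left_mem 𝒜 h1
    have hux : (u : R) * x = 1 := by simp [hx]
    rw [hux] at h2
    have h3 : ((DirectSum.decompose 𝒜 (1 : R)) (1 + k) : R) = 0 := by
      rw [DirectSum.decompose_of_mem_ne 𝒜 (SetLike.one_mem_graded 𝒜) (by omega)]
    have h4 : (u : R) * ((DirectSum.decompose 𝒜 x) k : R) = 0 := by rw [← h2, h3]
    calc ((DirectSum.decompose 𝒜 x) k : R)
        = x * ((u : R) * ((DirectSum.decompose 𝒜 x) k : R)) := by
          rw [← mul_assoc]; simp [hx]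
      _ = 0 := by rw [h4, mul_zero]
  have hsum := DirectSum.sum_support_decompose 𝒜 x
  rw [← hsum]
  refine sum_mem fun k _ => ?_
  by_cases h : k = -1
  · subst h; exact SetLike.coe_mem _
  · rw [hc k h]; exact zero_mem _

private lemma aux_zpow_mem {R : Type*} [CommRing R] (𝒜 : ℤ → AddSubgroup R) [GradedRing 𝒜]
    (u : Rˣ) (h1 : (u : R) ∈ 𝒜 1) : ∀ n : ℤ, ((u ^ n : Rˣ) : R) ∈ 𝒜 n := by
  have hm : ((u⁻¹ : Rˣ) : R) ∈ 𝒜 (-1) := aux_inv_mem 𝒜 u h1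
  intro n
  induction n using Int.induction_on with
  | zero => simpa using SetLike.one_mem_graded 𝒜
  | succ k ih =>
    have := SetLike.mul_mem_graded ih h1
    rw [zpow_add_one]
    push_cast
    exact this
  | pred k ih =>
    have := SetLike.mul_mem_graded ih hm
    rw [show (-(k : ℤ) - 1) = (-(k : ℤ)) + (-1) by ring, zpow_add]
    simpa [zpow_neg_one] using this

open LaurentPolynomial in
/-- For a ℤ-graded commutative ring `R` and a degree-one element `a` which is a unit of `R`,
there is a ring isomorphism from the Laurent polynomial ring `(𝒜 0)[T, T⁻¹]` over the
degree-zero subring `𝒜 0` onto `R`, sending `T` to `a` and restricting to the inclusion on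
`𝒜 0`; moreover, for each `n : ℤ`, it identifies the degree-`n` homogeneous component
`{ C r * T n : r ∈ 𝒜 0 }` of the Laurent polynomial ring with `𝒜 n`. -/
theorem laurent_equiv_of_graded_of_isUnit_degree_one
    {R : Type*} [CommRing R] (𝒜 : ℤ → AddSubgroup R) [GradedRing 𝒜]
    (a : R) (ha : a ∈ 𝒜 1) (hu : IsUnit a) :
    ∃ e : LaurentPolynomial (𝒜 0) ≃+* R,
      e (T 1) = a ∧
      (∀ r : 𝒜 0, e (C r) = (r : R)) ∧
      (∀ n : ℤ,
        e '' { f : LaurentPolynomial (𝒜 0) | ∃ r : 𝒜 0, f = C r * T n } =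
          (𝒜 n : Set R)) := by
  classical
  obtain ⟨u, rfl⟩ := hu
  -- the inclusion of the degree-zero subring
  let f : (𝒜 0) →+* R :=
    { toFun := Subtype.val
      map_one' := rfl
      map_mul' := fun _ _ => rfl
      map_zero' := rfl
      map_add' := fun _ _ => rfl }
  let g : Multiplicative ℤ →* R := (Units.coeHom R).comp (zpowersHom Rˣ u)
  let φ : LaurentPolynomial (𝒜 0) →+* R :=
    AddMonoidAlgebra.liftNCRingHom f g fun _ _ => Commute.all _ _
  have hφ : ∀ (n : ℤ) (r : 𝒜 0), φ (AddMonoidAlgebra.single n r) = (r : R) * ((u ^ n : Rˣ) : R) := by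
    intro n r
    exact AddMonoidAlgebra.liftNC_single _ _ _ _
  have hmem : ∀ (n : ℤ) (r : 𝒜 0), φ (AddMonoidAlgebra.single n r) ∈ 𝒜 n := by
    intro n r
    rw [hφ]
    have := SetLike.mul_mem_graded r.2 (aux_zpow_mem 𝒜 u ha n)
    rwa [zero_add] at this
  have hinv : ∀ (m : ℤ) (y : R), y * ((u ^ m : Rˣ) : R) = 0 → y = 0 := by
    intro m y hy
    have := congrArg (fun z => z * ((u ^ (-m) : Rˣ) : R)) hy
    simp only [zero_mul] at this
    rwa [mul_assoc, ← Units.val_mul, ← zpow_add, add_neg_cancel, zpow_zero, Units.val_one,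
      mul_one] at this
  have hinj : Function.Injective φ := by
    rw [injective_iff_map_eq_zero]
    intro p hp
    refine AddMonoidAlgebra.ext (Finsupp.ext fun m => ?_)
    by_cases hms : m ∈ p.coeff.support
    · have hps : p = ∑ n ∈ p.coeff.support, AddMonoidAlgebra.single n (p.coeff n) := by
        conv_lhs => rw [← AddMonoidAlgebra.sum_coeff_single p]
        rfl
      have hterm : ∀ n ∈ p.coeff.support,
          ((DirectSum.decompose 𝒜 (φ (AddMonoidAlgebra.single n (p.coeff n)))) m : R)
          = if n = m then (p.coeff n : R) * ((u ^ n : Rˣ) : R) else 0 := by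
        intro n _
        by_cases h : n = m
        · subst h
          rw [DirectSum.decompose_of_mem_same 𝒜 (hmem n (p.coeff n)), hφ, if_pos rfl]
        · rw [DirectSum.decompose_of_mem_ne 𝒜 (hmem n (p.coeff n)) h, if_neg h]
      have hd : ((DirectSum.decompose 𝒜 (φ p)) m : R)
          = (p.coeff m : R) * ((u ^ m : Rˣ) : R) := by
        conv_lhs => rw [hps]
        rw [map_sum, DirectSum.decompose_sum, DFinsupp.finset_sum_apply,
          AddSubmonoidClass.coe_finset_sum, Finset.sum_congr rfl hterm,
          Finset.sum_ite_eq' p.coeff.support m, if_pos hms]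
      rw [hp, DirectSum.decompose_zero] at hd
      simp only [DirectSum.zero_apply, ZeroMemClass.coe_zero] at hd
      have h0 : (p.coeff m : R) = 0 := hinv m _ hd.symm
      exact Subtype.ext h0
    · rw [Finsupp.notMem_support_iff.mp hms]; rfl
  have key : ∀ (n : ℤ) (x : R), x ∈ 𝒜 n →
      ∃ r : 𝒜 0, φ (AddMonoidAlgebra.single n r) = x := by
    intro n x hx
    have hy : x * ((u ^ (-n) : Rˣ) : R) ∈ 𝒜 0 := by
      have := SetLike.mul_mem_graded hx (aux_zpow_mem 𝒜 u ha (-n))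
      rwa [add_neg_cancel] at this
    refine ⟨⟨x * ((u ^ (-n) : Rˣ) : R), hy⟩, ?_⟩
    rw [hφ]
    show x * ((u ^ (-n) : Rˣ) : R) * ((u ^ n : Rˣ) : R) = x
    rw [mul_assoc, ← Units.val_mul, ← zpow_add, neg_add_cancel, zpow_zero, Units.val_one, mul_one]
  have hsurj : Function.Surjective φ := by
    intro x
    refine ⟨∑ n ∈ (DirectSum.decompose 𝒜 x).support,
      AddMonoidAlgebra.single n (Classical.choose (key n _ (SetLike.coe_mem ((DirectSum.decompose 𝒜 x) n)))),
      ?_⟩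
    rw [map_sum]
    rw [Finset.sum_congr rfl fun n _ =>
      Classical.choose_spec (key n _ (SetLike.coe_mem ((DirectSum.decompose 𝒜 x) n)))]
    exact DirectSum.sum_support_decompose 𝒜 x
  refine ⟨RingEquiv.ofBijective φ ⟨hinj, hsurj⟩, ?_, ?_, ?_⟩
  · show φ (T 1) = (u : R)
    have h : (T 1 : LaurentPolynomial (𝒜 0)) = AddMonoidAlgebra.single 1 1 := rfl
    rw [h, hφ]
    simp
  · intro r
    show φ (C r) = (r : R)
    have h : (C r : LaurentPolynomial (𝒜 0)) = AddMonoidAlgebra.single 0 r := by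
      rw [single_eq_C_mul_T, T_zero, mul_one]
    rw [h, hφ]
    simp
  · intro n
    ext x
    constructor
    · rintro ⟨p, ⟨r, rfl⟩, rfl⟩
      show φ (C r * T n) ∈ 𝒜 n
      rw [← single_eq_C_mul_T]
      exact hmem n r
    · intro hx
      obtain ⟨r, hr⟩ := key n x hx
      exact ⟨AddMonoidAlgebra.single n r, ⟨r, single_eq_C_mul_T r n⟩, hr⟩
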